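/- Let G be a finite connected P_4-free graph and let A and B be independent sets of G with |A| = |B| ≥ 2. Then A and B are TS-reconfigurable in G if and only if there is a co-component D of G with A ∪ B ⊆ D such that A and B are TS-reconfigurable in the induced subgraph G[D]. -/

import Mathlib

/-- `A` is an independent set (of vertices) of the graph `H`. -/
def IsIndepSet {W : Type*} (H : SimpleGraph W) (A : Set W) : Prop :=
  ∀ u ∈ A, ∀ v ∈ A, ¬H.Adj u v

/-- Two sets are TS-adjacent in `H` (differ by one token slide). -/
def TSAdj {W : Type*} (H : SimpleGraph W) (A B : Set W) : Prop :=
  ∃ u ∈ A, ∃ v, v ∉ A ∧ H.Adj u v ∧ B = insert v (A \ {u})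

/-- `A` and `B` are TS-reconfigurable in `H`: there is a sequence of independent sets from
`A` to `B` in which consecutive sets are TS-adjacent. -/
def TSReconf {W : Type*} (H : SimpleGraph W) (A B : Set W) : Prop :=
  ∃ (ℓ : ℕ) (ρ : ℕ → Set W), ρ 0 = A ∧ ρ ℓ = B ∧ (∀ i ≤ ℓ, IsIndepSet H (ρ i)) ∧
    ∀ i < ℓ, TSAdj H (ρ i) (ρ (i + 1))

/-- A nonempty independent set is contained in the co-component of any of its elements. -/
lemma indep_subset_supp {V : Type*} {G : SimpleGraph V} {S : Set V}
    (hS : IsIndepSet G S) {u : V} (hu : u ∈ S) :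
    S ⊆ (Gᶜ.connectedComponentMk u).supp := by
  intro v hv
  simp only [SimpleGraph.ConnectedComponent.mem_supp_iff]
  by_cases h : v = u
  · subst h; rfl
  · exact SimpleGraph.ConnectedComponent.sound
      (((G.compl_adj v u).mpr ⟨h, hS v hv u hu⟩).reachable)

/-- for a finite connected `P_4`-free graph `G` and independent sets `A`,
`B` with `|A| = |B| ≥ 2`, the sets `A` and `B` are TS-reconfigurable in `G` iff there is
a co-component `D` of `G` (the vertex set of a connected component of the complement of
`G`) with `A ∪ B ⊆ D` such that `A` and `B` are TS-reconfigurable in the induced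
subgraph `G[D]`. -/
theorem stmt18 {V : Type*} [Fintype V] (G : SimpleGraph V)
    (hconn : G.Connected)
    (hP4 : IsEmpty (SimpleGraph.pathGraph 4 ↪g G))
    (A B : Set V) (hA : IsIndepSet G A) (hB : IsIndepSet G B)
    (hcard : A.ncard = B.ncard) (h2 : 2 ≤ A.ncard) :
    TSReconf G A B ↔
      ∃ c : Gᶜ.ConnectedComponent, A ∪ B ⊆ c.supp ∧
        TSReconf (G.induce c.supp) (Subtype.val ⁻¹' A) (Subtype.val ⁻¹' B) := by
  constructor
  · rintro ⟨ℓ, ρ, h0, hℓ, hind, hadj⟩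
    obtain ⟨a, ha⟩ : A.Nonempty := Set.nonempty_of_ncard_ne_zero (by omega)
    set c := Gᶜ.connectedComponentMk a with hc
    -- every set in the sequence stays in `c.supp` and keeps its cardinality
    have key : ∀ i ≤ ℓ, ρ i ⊆ c.supp ∧ (ρ i).ncard = A.ncard := by
      intro i hi
      induction i with
      | zero =>
        rw [h0]
        exact ⟨indep_subset_supp hA ha, rfl⟩
      | succ n ih =>
        obtain ⟨hsub, hcardn⟩ := ih (by omega)
        obtain ⟨u, hu, v, hv, huv, heq⟩ := hadj n (by omega)
        have hcard' : (ρ (n + 1)).ncard = A.ncard := by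
          rw [heq, Set.ncard_exchange hv hu, hcardn]
        -- there is some w ∈ ρ n, w ≠ u, and w ∈ ρ (n+1)
        have h2n : 2 ≤ (ρ n).ncard := hcardn ▸ h2
        obtain ⟨w, hw, hwu⟩ : ∃ w ∈ ρ n, w ≠ u := by
          by_contra hcon
          push_neg at hcon
          have : ρ n ⊆ {u} := fun x hx => hcon x hx
          have := Set.ncard_le_ncard this (Set.finite_singleton u)
          simp only [Set.ncard_singleton] at this
          omega
        have hw' : w ∈ ρ (n + 1) := by
          rw [heq]; exact Set.mem_insert_of_mem _ ⟨hw, hwu⟩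
        have hsame : (Gᶜ.connectedComponentMk w) = c := hsub hw
        refine ⟨?_, hcard'⟩
        calc ρ (n + 1) ⊆ (Gᶜ.connectedComponentMk w).supp :=
              indep_subset_supp (hind (n + 1) (by omega)) hw'
          _ = c.supp := by rw [hsame]
    have hABc : A ∪ B ⊆ c.supp := by
      rw [← h0, ← hℓ]
      exact Set.union_subset (key 0 (by omega)).1 (key ℓ le_rfl).1
    refine ⟨c, hABc, ℓ, fun i => Subtype.val ⁻¹' ρ i, by beta_reduce; rw [h0], by beta_reduce; rw [hℓ], ?_, ?_⟩
    · intro i hi x hx y hy hxy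
      exact hind i hi x.val hx y.val hy hxy
    · intro i hi
      obtain ⟨u, hu, v, hv, huv, heq⟩ := hadj i (by omega)
      have hui : u ∈ c.supp := (key i (by omega)).1 hu
      have hvi : v ∈ c.supp := (key (i + 1) (by omega)).1 (heq ▸ Set.mem_insert v _)
      refine ⟨⟨u, hui⟩, hu, ⟨v, hvi⟩, hv, huv, ?_⟩
      ext ⟨x, hx⟩
      simp only [Set.mem_preimage, heq, Set.mem_insert_iff, Set.mem_diff,
        Set.mem_singleton_iff, Subtype.ext_iff]
  · rintro ⟨c, hABc, ℓ, ρ, h0, hℓ, hind, hadj⟩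
    refine ⟨ℓ, fun i => Subtype.val '' ρ i, ?_, ?_, ?_, ?_⟩
    · beta_reduce
      rw [h0, Set.image_preimage_eq_inter_range, Subtype.range_coe,
        Set.inter_eq_left.mpr (fun x hx => hABc (Or.inl hx))]
    · beta_reduce
      rw [hℓ, Set.image_preimage_eq_inter_range, Subtype.range_coe,
        Set.inter_eq_left.mpr (fun x hx => hABc (Or.inr hx))]
    · rintro i hi x ⟨x', hx', rfl⟩ y ⟨y', hy', rfl⟩ hxy
      exact hind i hi x' hx' y' hy' hxy
    · intro i hi
      obtain ⟨u, hu, v, hv, huv, heq⟩ := hadj i hi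
      refine ⟨u.val, ⟨u, hu, rfl⟩, v.val, ?_, huv, ?_⟩
      · rintro ⟨v', hv', hveq⟩
        exact hv (Subtype.ext hveq ▸ hv')
      · beta_reduce
        rw [heq, Set.image_insert_eq,
          Set.image_diff Subtype.val_injective, Set.image_singleton]
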